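/- The l1 matrix norm ‖A‖_{l1} = ∑_{i,j} |A_{ij}| is not contracting under CPTP maps: there exist 4×4 density matrices ρ and σ, and a quantum operation Φ on 4×4 complex matrices, such that ‖Φ(ρ) − Φ(σ)‖_{l1} > ‖ρ − σ‖_{l1}. -/

import Mathlib

open Matrix BigOperators ComplexOrder

/-- The l1-coherence of a matrix: the sum of the absolute values of its
off-diagonal entries. -/
noncomputable def Cl1 {n : ℕ} (A : Matrix (Fin n) (Fin n) ℂ) : ℝ :=
  ∑ i, ∑ j, if i ≠ j then ‖A i j‖ else 0

/-- A density matrix: positive semidefinite with trace 1. -/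
def IsDensity {n : ℕ} (ρ : Matrix (Fin n) (Fin n) ℂ) : Prop :=
  ρ.PosSemidef ∧ ρ.trace = 1

/-- A quantum operation (CPTP map) given by a finite family of Kraus operators. -/
def IsQuantumOp {n : ℕ} (Φ : Matrix (Fin n) (Fin n) ℂ → Matrix (Fin n) (Fin n) ℂ) : Prop :=
  ∃ (m : ℕ) (K : Fin m → Matrix (Fin n) (Fin n) ℂ),
    (∑ i, (K i)ᴴ * K i) = 1 ∧ ∀ ρ, Φ ρ = ∑ i, K i * ρ * (K i)ᴴ

/-- The dephasing map `Δ`, keeping only the diagonal part of a matrix. -/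
def Deph {n : ℕ} (A : Matrix (Fin n) (Fin n) ℂ) : Matrix (Fin n) (Fin n) ℂ :=
  Matrix.of fun i j => if i = j then A i j else 0

/-- The entrywise l1 norm of a matrix. -/
noncomputable def l1Norm {n : ℕ} (A : Matrix (Fin n) (Fin n) ℂ) : ℝ :=
  ∑ i, ∑ j, ‖A i j‖

/-- The Kraus operator: a rotation on the first two coordinates. -/
noncomputable def Kmat : Matrix (Fin 4) (Fin 4) ℂ :=
  !![3/5, -4/5, 0, 0; 4/5, 3/5, 0, 0; 0, 0, 1, 0; 0, 0, 0, 1]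

lemma Kmat_unitary : Kmatᴴ * Kmat = 1 := by
  ext i j
  fin_cases i <;> fin_cases j <;>
    simp [Kmat, Matrix.mul_apply, Fin.sum_univ_four, Matrix.one_apply,
      Matrix.vecHead, Matrix.vecTail, map_div₀, Complex.conj_ofNat, Complex.ext_iff] <;>
    norm_num

noncomputable def rho1 : Matrix (Fin 4) (Fin 4) ℂ :=
  !![1,0,0,0; 0,0,0,0; 0,0,0,0; 0,0,0,0]

noncomputable def rho2 : Matrix (Fin 4) (Fin 4) ℂ :=
  !![0,0,0,0; 0,1,0,0; 0,0,0,0; 0,0,0,0]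

lemma rho1_diag : rho1 = Matrix.diagonal ![1,0,0,0] := by
  ext i j; fin_cases i <;> fin_cases j <;> simp [rho1, Matrix.diagonal, Matrix.vecHead, Matrix.vecTail, Function.comp]

lemma rho2_diag : rho2 = Matrix.diagonal ![0,1,0,0] := by
  ext i j; fin_cases i <;> fin_cases j <;> simp [rho2, Matrix.diagonal, Matrix.vecHead, Matrix.vecTail, Function.comp]

set_option maxHeartbeats 1000000 in
lemma hD : Kmat * rho1 * Kmatᴴ - Kmat * rho2 * Kmatᴴ =
    !![-7/25, 24/25, 0, 0; 24/25, 7/25, 0, 0; 0,0,0,0; 0,0,0,0] := by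
  ext i j
  fin_cases i <;> fin_cases j <;>
    simp [Kmat, rho1, rho2, Matrix.mul_apply, Fin.sum_univ_four, Matrix.sub_apply,
      Matrix.conjTranspose_apply, Matrix.vecMul, dotProduct, Function.comp,
      Matrix.vecHead, Matrix.vecTail, map_div₀, Complex.conj_ofNat, Complex.ext_iff] <;>
    norm_num

set_option maxHeartbeats 1000000 in
theorem l1_norm_not_contracting_under_CPTP :
    ∃ (ρ σ : Matrix (Fin 4) (Fin 4) ℂ)
      (Φ : Matrix (Fin 4) (Fin 4) ℂ → Matrix (Fin 4) (Fin 4) ℂ),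
      IsDensity ρ ∧ IsDensity σ ∧ IsQuantumOp Φ ∧
      l1Norm (ρ - σ) < l1Norm (Φ ρ - Φ σ) := by
  refine ⟨rho1, rho2,
    fun A => Kmat * A * Kmatᴴ, ⟨?_, ?_⟩, ⟨?_, ?_⟩, ⟨1, fun _ => Kmat, ?_, ?_⟩, ?_⟩
  · rw [rho1_diag]
    refine Matrix.posSemidef_diagonal_iff.mpr fun i => ?_
    fin_cases i <;> simp
  · simp [rho1, Matrix.trace, Matrix.diag, Fin.sum_univ_four, Matrix.vecHead, Matrix.vecTail, Function.comp]
  · rw [rho2_diag]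
    refine Matrix.posSemidef_diagonal_iff.mpr fun i => ?_
    fin_cases i <;> simp
  · simp [rho2, Matrix.trace, Matrix.diag, Fin.sum_univ_four, Matrix.vecHead, Matrix.vecTail, Function.comp]
  · simpa using Kmat_unitary
  · intro ρ; simp
  · have h1 : l1Norm (rho1 - rho2) = 2 := by
      simp [l1Norm, rho1, rho2, Fin.sum_univ_four, Matrix.sub_apply, Matrix.vecHead, Matrix.vecTail, Function.comp]
      norm_num
    have h2 : l1Norm (Kmat * rho1 * Kmatᴴ - Kmat * rho2 * Kmatᴴ) = 62/25 := by
      rw [hD]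
      simp [l1Norm, Fin.sum_univ_four, Matrix.vecHead, Matrix.vecTail, map_div₀,
        Complex.norm_ofNat]
      norm_num
    rw [h1, h2]; norm_num
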